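/- Let Ω₀, Ω₁ ⊂ ℝⁿ be compact sets, β ∈ ℝ, and f : Ω₀ → ℝ a C² function (defined on a neighborhood of Ω₀) with β > f(x) for all x ∈ Ω₀. Let c(x,y) = √((β − f(x))² + |x − y|²). If min_{x∈Ω₀} (β − f(x)) > (max_{x∈Ω₀, y∈Ω₁} |x − y|) · (max_{x∈Ω₀} |∇f(x)|), then det (∂²c/∂xᵢ∂y_j)(x,y) ≠ 0 for every (x,y) ∈ Ω₀ × Ω₁. -/

import Mathlib

open scoped RealInnerProductSpace

lemma inner_fderiv_sqrt {n : ℕ} (a : ℝ) (x' y : EuclideanSpace ℝ (Fin n)) (j : Fin n)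
    (h : a ^ 2 + ‖x' - y‖ ^ 2 ≠ 0) :
    fderiv ℝ (fun y' => Real.sqrt (a ^ 2 + ‖x' - y'‖ ^ 2)) y (EuclideanSpace.single j 1)
      = (y j - x' j) / Real.sqrt (a ^ 2 + ‖x' - y‖ ^ 2) := by
  have h1 : HasFDerivAt (fun y' : EuclideanSpace ℝ (Fin n) => x' - y')
      (0 - ContinuousLinearMap.id ℝ _) y := (hasFDerivAt_const x' y).sub (hasFDerivAt_id y)
  have h2 := (hasFDerivAt_const (a ^ 2) y).add h1.norm_sq
  have h3 := h2.sqrt h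
  simp only [Pi.add_apply] at h3
  rw [h3.fderiv]
  simp only [ContinuousLinearMap.smul_apply, ContinuousLinearMap.add_apply,
    ContinuousLinearMap.zero_apply, ContinuousLinearMap.smul_apply,
    ContinuousLinearMap.comp_apply, ContinuousLinearMap.sub_apply,
    ContinuousLinearMap.id_apply, zero_add, smul_eq_mul]
  simp only [zero_sub, innerSL_apply_apply, inner_neg_right, EuclideanSpace.inner_single_right,
    RCLike.conj_to_real, PiLp.sub_apply, nsmul_eq_mul, Nat.cast_ofNat]
  have hpos : 0 < a ^ 2 + ‖x' - y‖ ^ 2 := lt_of_le_of_ne (by positivity) (Ne.symm h)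
  have hs : Real.sqrt (a ^ 2 + ‖x' - y‖ ^ 2) ≠ 0 := (Real.sqrt_pos.mpr hpos).ne'
  field_simp
  ring


/-- For the cost `c(x,y) = √((β − f(x))² + |x − y|²)` with `f` of class `C²`
on a neighborhood of the compact set `Ω₀` and `β > f` on `Ω₀`, if
`min_{Ω₀}(β − f) > (max |x − y|)(max |∇f|)` then the determinant of the matrix of mixed
second partials of `c` is nonzero at every `(x,y) ∈ Ω₀ × Ω₁`.  (Here `m₀` is a positive
lower bound for `β − f`, `G` an upper bound for `|x − y|` and `Mf` an upper bound for
`|∇f|`, with `G · Mf < m₀`.) -/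
theorem det_nonzero_constant_g {n : ℕ}
    (Ω₀ Ω₁ : Set (EuclideanSpace ℝ (Fin n)))
    (hΩ₀ : IsCompact Ω₀) (hΩ₁ : IsCompact Ω₁)
    (β : ℝ) (f : EuclideanSpace ℝ (Fin n) → ℝ)
    (U : Set (EuclideanSpace ℝ (Fin n))) (hU : IsOpen U) (hΩU : Ω₀ ⊆ U)
    (hf : ContDiffOn ℝ 2 f U)
    (hβf : ∀ x ∈ Ω₀, f x < β)
    (m₀ G Mf : ℝ)
    (hm₀ : ∀ x ∈ Ω₀, m₀ ≤ β - f x)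
    (hG : ∀ x ∈ Ω₀, ∀ y ∈ Ω₁, ‖x - y‖ ≤ G)
    (hMf : ∀ x ∈ Ω₀, ‖gradient f x‖ ≤ Mf)
    (hcond : G * Mf < m₀) :
    ∀ x ∈ Ω₀, ∀ y ∈ Ω₁,
      Matrix.det (Matrix.of fun i j : Fin n =>
        fderiv ℝ (fun x' => fderiv ℝ
            (fun y' => Real.sqrt ((β - f x') ^ 2 + ‖x' - y'‖ ^ 2)) y
            (EuclideanSpace.single j 1)) x (EuclideanSpace.single i 1)) ≠ 0 := by
  intro x hx y hy
  have hxU : x ∈ U := hΩU hx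
  have hMf0 : (0 : ℝ) ≤ Mf := le_trans (norm_nonneg _) (hMf x hx)
  have hG0 : (0 : ℝ) ≤ G := le_trans (norm_nonneg _) (hG x hx y hy)
  have hm0pos : 0 < m₀ := lt_of_le_of_lt (mul_nonneg hG0 hMf0) hcond
  set g : ℝ := β - f x with hgdef
  have hgpos : 0 < g := lt_of_lt_of_le hm0pos (hm₀ x hx)
  set c : ℝ := Real.sqrt (g ^ 2 + ‖x - y‖ ^ 2) with hcdef
  have hqpos : 0 < g ^ 2 + ‖x - y‖ ^ 2 := by positivity
  have hcpos : 0 < c := Real.sqrt_pos.mpr hqpos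
  have hc2 : c ^ 2 = g ^ 2 + ‖x - y‖ ^ 2 := Real.sq_sqrt hqpos.le
  -- f differentiability and gradient
  have hfd : DifferentiableAt ℝ f x :=
    ((hf.differentiableOn two_ne_zero) x hxU).differentiableAt (hU.mem_nhds hxU)
  set p : EuclideanSpace ℝ (Fin n) := gradient f x with hpdef
  have hf' : HasFDerivAt f ((InnerProductSpace.toDual ℝ _) p) x :=
    hfd.hasGradientAt.hasFDerivAt
  set T : ℝ := ⟪p, x - y⟫ with hTdef
  -- the vectors
  set a : Fin n → ℝ := fun i => (g * p i - (x - y) i) / c ^ 2 with hadef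
  set b : Fin n → ℝ := fun j => (x - y) j with hbdef
  -- the neighborhood where things are smooth
  have hVopen : IsOpen (U ∩ f ⁻¹' Set.Iio β) :=
    hf.continuousOn.isOpen_inter_preimage hU isOpen_Iio
  have hmemV : x ∈ U ∩ f ⁻¹' Set.Iio β := ⟨hxU, hβf x hx⟩
  -- the matrix identity
  have hM : (Matrix.of fun i j : Fin n =>
        fderiv ℝ (fun x' => fderiv ℝ
            (fun y' => Real.sqrt ((β - f x') ^ 2 + ‖x' - y'‖ ^ 2)) y
            (EuclideanSpace.single j 1)) x (EuclideanSpace.single i 1))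
      = (-(c⁻¹)) • (1 + Matrix.replicateCol Unit a * Matrix.replicateRow Unit b) := by
    ext i j
    -- replace inner fderiv by explicit formula near x
    have hev : (fun x' => fderiv ℝ
          (fun y' => Real.sqrt ((β - f x') ^ 2 + ‖x' - y'‖ ^ 2)) y
          (EuclideanSpace.single j 1)) =ᶠ[nhds x]
        (fun x' => (y j - x' j) / Real.sqrt ((β - f x') ^ 2 + ‖x' - y‖ ^ 2)) := by
      filter_upwards [hVopen.mem_nhds hmemV] with x' hx'
      have hane : (β - f x') ^ 2 + ‖x' - y‖ ^ 2 ≠ 0 := by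
        have h1 : 0 < (β - f x') ^ 2 := by
          have := hx'.2
          have : β - f x' ≠ 0 := by simp at this; linarith
          positivity
        positivity
      exact inner_fderiv_sqrt _ _ _ _ hane
    rw [Matrix.of_apply, hev.fderiv_eq]
    -- now compute the derivative of the explicit formula
    have hproj : HasFDerivAt (fun x' : EuclideanSpace ℝ (Fin n) => x' j)
        (EuclideanSpace.proj (𝕜 := ℝ) j) x := by
      exact (EuclideanSpace.proj (𝕜 := ℝ) j).hasFDerivAt
    have hN : HasFDerivAt (fun x' : EuclideanSpace ℝ (Fin n) => y j - x' j)
        ((0 : _ →L[ℝ] ℝ) - EuclideanSpace.proj j) x :=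
      (hasFDerivAt_const (y j) x).sub hproj
    have hb' : HasFDerivAt (fun x' => β - f x')
        ((0 : _ →L[ℝ] ℝ) - (InnerProductSpace.toDual ℝ _) p) x :=
      (hasFDerivAt_const β x).sub hf'
    have hq1 : HasFDerivAt (fun x' => (β - f x') ^ 2)
        (g • ((0 : _ →L[ℝ] ℝ) - (InnerProductSpace.toDual ℝ _) p)
          + g • ((0 : _ →L[ℝ] ℝ) - (InnerProductSpace.toDual ℝ _) p)) x := by
      have h := hb'.mul hb'
      simp only [← sq] at h
      exact h
    have hq2 : HasFDerivAt (fun x' : EuclideanSpace ℝ (Fin n) => ‖x' - y‖ ^ 2)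
        (2 • ((innerSL ℝ) (x - y)).comp
          (ContinuousLinearMap.id ℝ _ - 0)) x :=
      ((hasFDerivAt_id x).sub (hasFDerivAt_const y x)).norm_sq
    have hq := hq1.add hq2
    have hD := hq.sqrt (by exact hqpos.ne')
    have hDinv := (hasDerivAt_inv hcpos.ne').comp_hasFDerivAt x hD
    have hφ := hN.mul hDinv
    have : (fun x' => (y j - x' j) / Real.sqrt ((β - f x') ^ 2 + ‖x' - y‖ ^ 2))
        = fun x' => (y j - x' j) * (Real.sqrt ((β - f x') ^ 2 + ‖x' - y‖ ^ 2))⁻¹ := by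
      funext x'; rw [div_eq_mul_inv]
    simp only [Function.comp_def, Pi.mul_def, Pi.add_apply] at hφ
    rw [this, hφ.fderiv]
    -- evaluate
    simp only [ContinuousLinearMap.add_apply, ContinuousLinearMap.smul_apply,
      ContinuousLinearMap.comp_apply, ContinuousLinearMap.sub_apply,
      ContinuousLinearMap.zero_apply, ContinuousLinearMap.id_apply,
      InnerProductSpace.toDual_apply_apply,
      EuclideanSpace.inner_single_right, RCLike.conj_to_real,
      smul_eq_mul, nsmul_eq_mul, Nat.cast_ofNat, zero_sub, sub_zero, zero_add,
      Matrix.smul_apply, Matrix.add_apply, Matrix.mul_apply, Matrix.one_apply,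
      Matrix.replicateCol_apply, Matrix.replicateRow_apply, Finset.sum_const, Finset.card_univ,
      Fintype.card_unit, one_smul]
    simp only [ContinuousLinearMap.neg_apply, InnerProductSpace.toDual_apply_apply,
      EuclideanSpace.inner_single_right, RCLike.conj_to_real, innerSL_apply_apply, mul_one]
    rw [show (EuclideanSpace.proj (𝕜 := ℝ) j) (EuclideanSpace.single i 1 : EuclideanSpace ℝ (Fin n))
        = ((EuclideanSpace.single i 1 : EuclideanSpace ℝ (Fin n)) j) from rfl,
      EuclideanSpace.single_apply]
    rw [show β - f x = g from rfl]
    rw [show Real.sqrt (g ^ 2 + ‖x - y‖ ^ 2) = c from rfl]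
    simp only [hadef, hbdef, PiLp.sub_apply]
    have hcne : c ≠ 0 := hcpos.ne'
    by_cases hij : i = j
    · subst hij
      simp only [if_pos rfl]
      field_simp
      ring
    · simp only [if_neg hij, if_neg (Ne.symm hij)]
      field_simp
      ring
  rw [hM, Matrix.det_smul, Matrix.det_one_add_replicateCol_mul_replicateRow]
  have hT : T = ∑ j, p j * (x - y) j := by
    simp [hTdef, PiLp.inner_apply, RCLike.inner_apply, conj_trivial]
    exact Finset.sum_congr rfl fun j _ => mul_comm _ _
  have hS : ‖x - y‖ ^ 2 = ∑ j, (x - y) j * (x - y) j := by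
    rw [← real_inner_self_eq_norm_sq]
    simp [PiLp.inner_apply, RCLike.inner_apply, conj_trivial]
    rw [EuclideanSpace.norm_sq_eq]
    exact Finset.sum_congr rfl fun j _ =>
      (by rw [Real.norm_eq_abs, sq_abs, sq] : ‖(x - y) j‖ ^ 2 = (x - y) j * (x - y) j)
  have hba : dotProduct b a = (g * T - ‖x - y‖ ^ 2) / c ^ 2 := by
    simp only [dotProduct, hadef, hbdef]
    rw [hT, hS, Finset.mul_sum, ← Finset.sum_sub_distrib, Finset.sum_div]
    exact Finset.sum_congr rfl fun j _ => by ring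
  have habs : |T| ≤ Mf * G :=
    le_trans (abs_real_inner_le_norm p (x - y))
      (mul_le_mul (hMf x hx) (hG x hx y hy) (norm_nonneg _) hMf0)
  have hgT : 0 < g + T := by
    have h1 : -(Mf * G) ≤ T := (abs_le.mp habs).1
    have h2 : G * Mf < g := lt_of_lt_of_le hcond (hm₀ x hx)
    have h3 : G * Mf = Mf * G := mul_comm G Mf
    linarith
  have hpos1 : 0 < 1 + dotProduct b a := by
    rw [hba]
    have he : g * T - ‖x - y‖ ^ 2 = g * (g + T) - c ^ 2 := by rw [hc2]; ring
    rw [he]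
    have he2 : 1 + (g * (g + T) - c ^ 2) / c ^ 2 = g * (g + T) / c ^ 2 := by
      field_simp
      ring
    rw [he2]
    exact div_pos (mul_pos hgpos hgT) (pow_pos hcpos 2)
  exact mul_ne_zero (pow_ne_zero _ (neg_ne_zero.mpr (inv_ne_zero hcpos.ne'))) hpos1.ne'
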